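/- Let D be a Steiner 2-design S(2,k,v) with a near parallel class, let G_1 be its 1-block intersection graph, and let I be a maximum independent set of G_1 (so |I| = (v-1)/k, the blocks of I covering all points except one). Then every vertex of V(G_1) \ I is adjacent to either k-1 or k vertices of I; exactly (v-1)/(k-1) vertices outside I have exactly k-1 neighbors in I, and exactly (v-1)(v-2k+1)/(k(k-1)) vertices outside I have exactly k neighbors in I. -/

import Mathlib

open Finset

variable {α : Type*}

/-- A Steiner 2-design `S(2,k,v)`: the point set has `v` points, every block has
`k` points, and every pair of distinct points lies in exactly one block. -/
def IsSteiner [Fintype α] [DecidableEq α] (v k : ℕ) (B : Finset (Finset α)) : Prop :=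
  Fintype.card α = v ∧ (∀ b ∈ B, b.card = k) ∧
    ∀ x y : α, x ≠ y → (B.filter fun b => x ∈ b ∧ y ∈ b).card = 1

/-- The `i`-block intersection graph: vertices are the blocks of `B`, two blocks
adjacent iff they intersect in exactly `i` points. -/
def BIG [DecidableEq α] (i : ℕ) (B : Finset (Finset α)) :
    SimpleGraph {b : Finset α // b ∈ B} where
  Adj b₁ b₂ := b₁ ≠ b₂ ∧ ((b₁ : Finset α) ∩ (b₂ : Finset α)).card = i
  symm := ⟨fun a b ⟨h1, h2⟩ => ⟨h1.symm, by rwa [Finset.inter_comm]⟩⟩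
  loopless := ⟨fun a ⟨h, _⟩ => h rfl⟩

instance [DecidableEq α] (i : ℕ) (B : Finset (Finset α)) :
    DecidableRel (BIG (α := α) i B).Adj := fun b₁ b₂ =>
  show Decidable (b₁ ≠ b₂ ∧ _) from instDecidableAnd

/-- `I` is a maximum independent set of `G`. -/
def IsMaxIndep {V : Type*} (G : SimpleGraph V) (I : Finset V) : Prop :=
  (∀ a ∈ I, ∀ b ∈ I, ¬ G.Adj a b) ∧
    ∀ J : Finset V, (∀ a ∈ J, ∀ b ∈ J, ¬ G.Adj a b) → J.card ≤ I.card

/-- A silver coloring of the `r`-regular graph `G` with respect to `I`: a proper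
`(r+1)`-coloring under which every vertex of `I` is rainbow (all `r+1` colors
appear on its closed neighborhood). -/
def SilverWith {V : Type*} (G : SimpleGraph V) (r : ℕ) (I : Finset V) : Prop :=
  ∃ c : V → Fin (r + 1), (∀ a b, G.Adj a b → c a ≠ c b) ∧
    ∀ x ∈ I, ∀ col : Fin (r + 1), ∃ y, (y = x ∨ G.Adj x y) ∧ c y = col

/-- `G` is silver: some silver coloring exists with respect to some maximum
independent set. -/
def IsSilver {V : Type*} (G : SimpleGraph V) (r : ℕ) : Prop :=
  ∃ I : Finset V, IsMaxIndep G I ∧ SilverWith G r I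

/-- A near parallel class: pairwise disjoint blocks of `B` covering every point
except exactly one. -/
def IsNearParallelClass [DecidableEq α] (B P : Finset (Finset α)) : Prop :=
  P ⊆ B ∧ (∀ b₁ ∈ P, ∀ b₂ ∈ P, b₁ ≠ b₂ → b₁ ∩ b₂ = ∅) ∧
    ∃ x : α, ∀ y : α, (∃ b ∈ P, y ∈ b) ↔ y ≠ x


lemma BIG_adj [DecidableEq α] (i : ℕ) (B : Finset (Finset α)) (b c : {b : Finset α // b ∈ B}) :
    (BIG i B).Adj b c ↔ b ≠ c ∧ ((b : Finset α) ∩ (c : Finset α)).card = i := Iff.rfl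

lemma card_subtype_filter [DecidableEq α] (B : Finset (Finset α)) (q : Finset α → Prop)
    [DecidablePred q] :
    (Finset.univ.filter fun b : {b : Finset α // b ∈ B} => q ↑b).card = (B.filter q).card := by
  refine Finset.card_bij (fun b _ => (b : Finset α)) ?_ ?_ ?_
  · intro a ha
    simp only [Finset.mem_filter, Finset.mem_univ, true_and] at ha
    exact Finset.mem_filter.mpr ⟨a.2, ha⟩
  · intro a _ b _ h
    exact Subtype.ext h
  · intro b hb
    simp only [Finset.mem_filter] at hb
    exact ⟨⟨b, hb.1⟩, by simp [hb.2], rfl⟩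

lemma nat_mul_pred (n : ℕ) : n * n - n = n * (n - 1) := by
  cases n with
  | zero => rfl
  | succ m => rw [Nat.succ_sub_one, Nat.mul_succ, Nat.add_sub_cancel]

/-- In an `S(2,k,v)` with a near parallel class, given a maximum independent set
`I` of the 1-block intersection graph: every vertex outside `I` has exactly
`k-1` or `k` neighbors in `I`; exactly `(v-1)/(k-1)` outside vertices have `k-1`
neighbors in `I`, and exactly `(v-1)(v-2k+1)/(k(k-1))` have `k` neighbors. -/
theorem stmt5 [Fintype α] [DecidableEq α] (v k : ℕ) (B : Finset (Finset α))
    (hk : 2 < k) (hkv : k < v) (hD : IsSteiner v k B)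
    (hNPC : ∃ P : Finset (Finset α), IsNearParallelClass B P)
    (I : Finset {b : Finset α // b ∈ B}) (hI : IsMaxIndep (BIG 1 B) I) :
    (∀ b : {b : Finset α // b ∈ B}, b ∉ I →
        (I.filter fun c => (BIG 1 B).Adj b c).card = k - 1 ∨
        (I.filter fun c => (BIG 1 B).Adj b c).card = k) ∧
    (Finset.univ.filter fun b : {b : Finset α // b ∈ B} =>
        b ∉ I ∧ (I.filter fun c => (BIG 1 B).Adj b c).card = k - 1).card
      = (v - 1) / (k - 1) ∧
    (Finset.univ.filter fun b : {b : Finset α // b ∈ B} =>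
        b ∉ I ∧ (I.filter fun c => (BIG 1 B).Adj b c).card = k).card
      = (v - 1) * (v + 1 - 2 * k) / (k * (k - 1)) := by
  obtain ⟨hv, hbk, hpair⟩ := hD
  obtain ⟨P, hPB, hPdisj, x₁, hx₁⟩ := hNPC
  -- blocks intersect in at most one point
  have hle1 : ∀ b₁ ∈ B, ∀ b₂ ∈ B, b₁ ≠ b₂ → (b₁ ∩ b₂).card ≤ 1 := by
    intro b₁ h₁ b₂ h₂ hne
    by_contra h
    push_neg at h
    obtain ⟨x, hx, y, hy, hxy⟩ := Finset.one_lt_card.mp h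
    simp only [Finset.mem_inter] at hx hy
    have hsub : ({b₁, b₂} : Finset (Finset α)) ⊆ B.filter (fun b => x ∈ b ∧ y ∈ b) := by
      intro b hb
      simp only [Finset.mem_insert, Finset.mem_singleton] at hb
      rcases hb with rfl | rfl <;> simp [Finset.mem_filter, hx.1, hx.2, hy.1, hy.2, h₁, h₂]
    have hcc := Finset.card_le_card hsub
    rw [Finset.card_pair hne, hpair x y hxy] at hcc
    omega
  have hpairex : ∀ x y : α, x ≠ y → ∃ b ∈ B, x ∈ b ∧ y ∈ b := by
    intro x y hxy
    obtain ⟨b, hb⟩ := Finset.card_eq_one.mp (hpair x y hxy)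
    have hbm : b ∈ B.filter (fun b => x ∈ b ∧ y ∈ b) := hb ▸ Finset.mem_singleton_self b
    simp only [Finset.mem_filter] at hbm
    exact ⟨b, hbm.1, hbm.2⟩
  -- the near parallel class has k * |P| = v - 1
  have hPcard : k * P.card = v - 1 := by
    have hU : P.biUnion id = Finset.univ.erase x₁ := by
      ext y
      simp only [Finset.mem_biUnion, id, Finset.mem_erase, Finset.mem_univ, and_true]
      exact hx₁ y
    have hdisj : ∀ b₁ ∈ P, ∀ b₂ ∈ P, b₁ ≠ b₂ → Disjoint (id b₁) (id b₂) := by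
      intro b₁ h₁ b₂ h₂ hne
      rw [id, id, Finset.disjoint_iff_inter_eq_empty]
      exact hPdisj b₁ h₁ b₂ h₂ hne
    have hcb := Finset.card_biUnion hdisj
    rw [hU, Finset.card_erase_of_mem (Finset.mem_univ x₁), Finset.card_univ, hv] at hcb
    have hall : ∀ b ∈ P, (id b).card = k := fun b hb => hbk b (hPB hb)
    rw [Finset.sum_congr rfl hall, Finset.sum_const, smul_eq_mul] at hcb
    rw [mul_comm]
    omega
  -- blocks of an independent set are pairwise disjoint
  have hJdisj : ∀ J : Finset {b : Finset α // b ∈ B},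
      (∀ a ∈ J, ∀ b ∈ J, ¬ (BIG 1 B).Adj a b) →
      ∀ a ∈ J, ∀ b ∈ J, a ≠ b → Disjoint (a : Finset α) (b : Finset α) := by
    intro J hJ a ha b hb hne
    have hvne : (a : Finset α) ≠ (b : Finset α) := fun h => hne (Subtype.ext h)
    have h1 := hle1 a a.2 b b.2 hvne
    have h2 : ¬((a : Finset α) ∩ (b : Finset α)).card = 1 := by
      intro h
      exact hJ a ha b hb ((BIG_adj 1 B a b).mpr ⟨hne, h⟩)
    rw [Finset.disjoint_iff_inter_eq_empty, ← Finset.card_eq_zero]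
    omega
  -- the union of blocks of an independent set
  have hJcard : ∀ J : Finset {b : Finset α // b ∈ B},
      (∀ a ∈ J, ∀ b ∈ J, ¬ (BIG 1 B).Adj a b) →
      (J.biUnion fun b => (b : Finset α)).card = k * J.card := by
    intro J hJ
    rw [Finset.card_biUnion (hJdisj J hJ)]
    have hall : ∀ b ∈ J, (b : Finset α).card = k := fun b _ => hbk _ b.2
    rw [Finset.sum_congr rfl hall, Finset.sum_const, smul_eq_mul, mul_comm]
  -- independent sets have card ≤ |P|
  have hbound : ∀ J : Finset {b : Finset α // b ∈ B},
      (∀ a ∈ J, ∀ b ∈ J, ¬ (BIG 1 B).Adj a b) → J.card ≤ P.card := by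
    intro J hJ
    have h1 : (J.biUnion fun b => (b : Finset α)).card ≤ v := by
      rw [← hv, ← Finset.card_univ]
      exact Finset.card_le_card (Finset.subset_univ _)
    rw [hJcard J hJ] at h1
    have h2 : k * J.card < k * (P.card + 1) := by
      have : k * (P.card + 1) = k * P.card + k := by ring
      omega
    exact Nat.lt_succ_iff.mp (Nat.lt_of_mul_lt_mul_left h2)
  -- lift P to the subtype
  have hIcard : I.card = P.card := by
    refine le_antisymm (hbound I hI.1) ?_
    have hinj : Function.Injective (fun p : {x // x ∈ P} => (⟨p.1, hPB p.2⟩ : {b : Finset α // b ∈ B})) := by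
      intro p q h
      exact Subtype.ext (by simpa using h)
    set P' : Finset {b : Finset α // b ∈ B} := P.attach.map ⟨_, hinj⟩ with hP'
    have hP'card : P'.card = P.card := by rw [hP', Finset.card_map, Finset.card_attach]
    have hP'mem : ∀ b : {b : Finset α // b ∈ B}, b ∈ P' → (b : Finset α) ∈ P := by
      intro b hb
      rw [hP', Finset.mem_map] at hb
      obtain ⟨p, _, hpb⟩ := hb
      rw [← hpb]
      exact p.2
    have hP'indep : ∀ a ∈ P', ∀ b ∈ P', ¬ (BIG 1 B).Adj a b := by
      intro a ha b hb hadj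
      rw [BIG_adj] at hadj
      have hvne : (a : Finset α) ≠ (b : Finset α) := fun h => hadj.1 (Subtype.ext h)
      have := hPdisj _ (hP'mem a ha) _ (hP'mem b hb) hvne
      rw [this] at hadj
      simp at hadj
    have := hI.2 P' hP'indep
    omega
  have hIk : k * I.card = v - 1 := by rw [hIcard]; exact hPcard
  -- the union of I's blocks misses exactly one point x₀
  set UI : Finset α := I.biUnion (fun b => (b : Finset α)) with hUIdef
  have hUIcard : UI.card = v - 1 := by rw [hUIdef, hJcard I hI.1, hIk]
  have hcompl : (Finset.univ \ UI).card = 1 := by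
    rw [Finset.card_sdiff_of_subset (Finset.subset_univ _), Finset.card_univ, hv, hUIcard]
    omega
  obtain ⟨x₀, hx₀⟩ := Finset.card_eq_one.mp hcompl
  have hUI : ∀ y, y ∈ UI ↔ y ≠ x₀ := by
    intro y
    rw [← not_iff_not, not_ne_iff, ← Finset.mem_singleton, ← hx₀, Finset.mem_sdiff]
    simp
  have hx₀I : ∀ c ∈ I, x₀ ∉ (c : Finset α) := by
    intro c hc h
    have : x₀ ∈ UI := Finset.mem_biUnion.mpr ⟨c, hc, h⟩
    exact (hUI x₀).mp this rfl
  -- counting neighbours in I of a block outside I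
  have hN : ∀ b : {b : Finset α // b ∈ B}, b ∉ I →
      (I.filter fun c => (BIG 1 B).Adj b c).card = ((b : Finset α) ∩ UI).card := by
    intro b hb
    have hbc : ∀ c ∈ I, ((b : Finset α) ∩ (c : Finset α)).card ≤ 1 := by
      intro c hc
      refine hle1 _ b.2 _ c.2 (fun h => hb ?_)
      rw [show b = c from Subtype.ext h]
      exact hc
    have hNadj : (I.filter fun c => (BIG 1 B).Adj b c)
        = I.filter (fun c : {b : Finset α // b ∈ B} => ((b : Finset α) ∩ (c : Finset α)).card = 1) := by
      apply Finset.filter_congr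
      intro c hc
      rw [BIG_adj]
      constructor
      · exact fun h => h.2
      · exact fun h => ⟨fun he => hb (he ▸ hc), h⟩
    have hsum : (I.filter fun c : {b : Finset α // b ∈ B} => ((b : Finset α) ∩ (c : Finset α)).card = 1).card
        = ∑ c ∈ I, ((b : Finset α) ∩ (c : Finset α)).card := by
      rw [Finset.card_filter]
      refine Finset.sum_congr rfl (fun c hc => ?_)
      rcases Nat.le_one_iff_eq_zero_or_eq_one.mp (hbc c hc) with h | h <;> simp [h]
    have hdisj : ∀ c₁ ∈ I, ∀ c₂ ∈ I, c₁ ≠ c₂ →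
        Disjoint ((b : Finset α) ∩ (c₁ : Finset α)) ((b : Finset α) ∩ (c₂ : Finset α)) := by
      intro c₁ h₁ c₂ h₂ hne
      exact (hJdisj I hI.1 c₁ h₁ c₂ h₂ hne).mono Finset.inter_subset_right
        Finset.inter_subset_right
    have hbU : (b : Finset α) ∩ UI = I.biUnion (fun c => (b : Finset α) ∩ (c : Finset α)) := by
      ext y
      rw [hUIdef]
      simp only [Finset.mem_biUnion, Finset.mem_inter]
      tauto
    rw [hNadj, hsum, hbU, Finset.card_biUnion hdisj]
  have hN1 : ∀ b : {b : Finset α // b ∈ B}, b ∉ I → x₀ ∈ (b : Finset α) →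
      (I.filter fun c => (BIG 1 B).Adj b c).card = k - 1 := by
    intro b hb hx
    rw [hN b hb]
    have : (b : Finset α) ∩ UI = (b : Finset α).erase x₀ := by
      ext y
      simp only [Finset.mem_inter, Finset.mem_erase, hUI y]
      tauto
    rw [this, Finset.card_erase_of_mem hx, hbk _ b.2]
  have hN2 : ∀ b : {b : Finset α // b ∈ B}, b ∉ I → x₀ ∉ (b : Finset α) →
      (I.filter fun c => (BIG 1 B).Adj b c).card = k := by
    intro b hb hx
    rw [hN b hb]
    have : (b : Finset α) ∩ UI = (b : Finset α) := by
      ext y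
      simp only [Finset.mem_inter, hUI y]
      constructor
      · exact fun h => h.1
      · exact fun h => ⟨h, fun he => hx (he ▸ h)⟩
    rw [this, hbk _ b.2]
  -- part 1
  have part1 : ∀ b : {b : Finset α // b ∈ B}, b ∉ I →
      (I.filter fun c => (BIG 1 B).Adj b c).card = k - 1 ∨
      (I.filter fun c => (BIG 1 B).Adj b c).card = k := by
    intro b hb
    by_cases hx : x₀ ∈ (b : Finset α)
    · exact Or.inl (hN1 b hb hx)
    · exact Or.inr (hN2 b hb hx)
  -- the (k-1)-neighbour blocks are exactly the blocks through x₀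
  have hS₁ : (Finset.univ.filter fun b : {b : Finset α // b ∈ B} =>
      b ∉ I ∧ (I.filter fun c => (BIG 1 B).Adj b c).card = k - 1)
      = Finset.univ.filter (fun b : {b : Finset α // b ∈ B} => x₀ ∈ (b : Finset α)) := by
    ext b
    simp only [Finset.mem_filter, Finset.mem_univ, true_and]
    constructor
    · rintro ⟨hbI, hcard⟩
      by_contra h
      rw [hN2 b hbI h] at hcard
      omega
    · intro h
      have hbI : b ∉ I := fun hbI => hx₀I b hbI h
      exact ⟨hbI, hN1 b hbI h⟩
  -- counting blocks through x₀
  set T : Finset (Finset α) := B.filter (fun b => x₀ ∈ b) with hTdef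
  have hTcount : v - 1 = T.card * (k - 1) := by
    have hTU : T.biUnion (fun b => b.erase x₀) = Finset.univ.erase x₀ := by
      ext y
      simp only [Finset.mem_biUnion, Finset.mem_erase, Finset.mem_univ, and_true, hTdef,
        Finset.mem_filter]
      constructor
      · rintro ⟨b, ⟨_, _⟩, hy, _⟩
        exact hy
      · intro hy
        obtain ⟨b, hbB, hxb, hyb⟩ := hpairex x₀ y (Ne.symm hy)
        exact ⟨b, ⟨hbB, hxb⟩, hy, hyb⟩
    have hTdisj : ∀ b₁ ∈ T, ∀ b₂ ∈ T, b₁ ≠ b₂ → Disjoint (b₁.erase x₀) (b₂.erase x₀) := by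
      intro b₁ h₁ b₂ h₂ hne
      rw [hTdef, Finset.mem_filter] at h₁ h₂
      rw [Finset.disjoint_left]
      intro y hy₁ hy₂
      simp only [Finset.mem_erase] at hy₁ hy₂
      have hcard := hle1 b₁ h₁.1 b₂ h₂.1 hne
      have hsub : ({x₀, y} : Finset α) ⊆ b₁ ∩ b₂ := by
        intro z hz
        simp only [Finset.mem_insert, Finset.mem_singleton] at hz
        rcases hz with rfl | rfl <;>
          simp [Finset.mem_inter, h₁.2, h₂.2, hy₁.2, hy₂.2]
      have h2 := Finset.card_le_card hsub
      rw [Finset.card_pair (Ne.symm hy₁.1)] at h2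
      omega
    have hcb := Finset.card_biUnion hTdisj
    rw [hTU, Finset.card_erase_of_mem (Finset.mem_univ _), Finset.card_univ, hv] at hcb
    have hall : ∀ b ∈ T, (b.erase x₀).card = k - 1 := by
      intro b hb
      rw [hTdef, Finset.mem_filter] at hb
      rw [Finset.card_erase_of_mem hb.2, hbk b hb.1]
    rw [Finset.sum_congr rfl hall, Finset.sum_const, smul_eq_mul] at hcb
    exact hcb
  -- total number of blocks
  have hBcard : B.card * (k * (k - 1)) = v * (v - 1) := by
    have h1 : ∑ p ∈ (Finset.univ : Finset α).offDiag,
        (B.filter fun b => p.1 ∈ b ∧ p.2 ∈ b).card = v * (v - 1) := by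
      have hall : ∀ p ∈ (Finset.univ : Finset α).offDiag,
          (B.filter fun b => p.1 ∈ b ∧ p.2 ∈ b).card = 1 :=
        fun p hp => hpair p.1 p.2 (Finset.mem_offDiag.mp hp).2.2
      rw [Finset.sum_congr rfl hall, Finset.sum_const, smul_eq_mul, mul_one,
        Finset.offDiag_card, Finset.card_univ, hv]
      exact nat_mul_pred v
    have h2 : ∑ p ∈ (Finset.univ : Finset α).offDiag,
        (B.filter fun b => p.1 ∈ b ∧ p.2 ∈ b).card
        = ∑ b ∈ B, ((Finset.univ : Finset α).offDiag.filter fun p => p.1 ∈ b ∧ p.2 ∈ b).card := by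
      simp_rw [Finset.card_filter]
      rw [Finset.sum_comm]
    have h3 : ∀ b ∈ B,
        ((Finset.univ : Finset α).offDiag.filter fun p : α × α => p.1 ∈ b ∧ p.2 ∈ b).card
        = k * (k - 1) := by
      intro b hb
      have heq : ((Finset.univ : Finset α).offDiag.filter fun p : α × α => p.1 ∈ b ∧ p.2 ∈ b)
          = b.offDiag := by
        ext p
        simp only [Finset.mem_filter, Finset.mem_offDiag, Finset.mem_univ, true_and]
        tauto
      rw [heq, Finset.offDiag_card, hbk b hb]
      exact nat_mul_pred k
    rw [h2, Finset.sum_congr rfl h3, Finset.sum_const, smul_eq_mul] at h1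
    exact h1
  -- partition of the blocks
  have hpartition : (Finset.univ.filter fun b : {b : Finset α // b ∈ B} =>
        b ∉ I ∧ (I.filter fun c => (BIG 1 B).Adj b c).card = k - 1).card
      + (Finset.univ.filter fun b : {b : Finset α // b ∈ B} =>
        b ∉ I ∧ (I.filter fun c => (BIG 1 B).Adj b c).card = k).card
      + I.card = B.card := by
    have hsplit := Finset.card_filter_add_card_filter_not
      (s := Finset.univ.filter fun b : {b : Finset α // b ∈ B} => b ∉ I)
      (p := fun b => (I.filter fun c => (BIG 1 B).Adj b c).card = k - 1)
    rw [Finset.filter_filter, Finset.filter_filter] at hsplit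
    have heq2 : (Finset.univ.filter fun b : {b : Finset α // b ∈ B} =>
        b ∉ I ∧ ¬(I.filter fun c => (BIG 1 B).Adj b c).card = k - 1)
        = Finset.univ.filter fun b : {b : Finset α // b ∈ B} =>
        b ∉ I ∧ (I.filter fun c => (BIG 1 B).Adj b c).card = k := by
      ext b
      simp only [Finset.mem_filter, Finset.mem_univ, true_and]
      constructor
      · rintro ⟨hbI, hne⟩
        rcases part1 b hbI with h | h
        · exact absurd h hne
        · exact ⟨hbI, h⟩
      · rintro ⟨hbI, hcard⟩
        exact ⟨hbI, by omega⟩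
    rw [heq2] at hsplit
    have huniv : (Finset.univ : Finset {b : Finset α // b ∈ B}).card = B.card := by
      rw [Finset.card_univ, Fintype.card_coe]
    have hnotI : (Finset.univ.filter fun b : {b : Finset α // b ∈ B} => b ∉ I).card
        = B.card - I.card := by
      have hfm : (Finset.univ.filter fun b : {b : Finset α // b ∈ B} => b ∈ I) = I := by
        ext b; simp
      rw [Finset.filter_not, hfm, Finset.card_sdiff_of_subset (Finset.subset_univ I), huniv]
    rw [hnotI] at hsplit
    have hIle : I.card ≤ B.card := by
      rw [← huniv]
      exact Finset.card_le_card (Finset.subset_univ I)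
    omega
  -- v is large enough
  have hI2 : 2 ≤ I.card := by
    by_contra h
    push_neg at h
    have h01 : I.card = 0 ∨ I.card = 1 := by omega
    rcases h01 with h0 | h1
    · rw [h0, mul_zero] at hIk
      omega
    · rw [h1, mul_one] at hIk
      have hT := hTcount
      rw [← hIk] at hT
      have hT01 : T.card = 0 ∨ T.card = 1 ∨ 2 ≤ T.card := by omega
      rcases hT01 with h0' | h1' | h2'
      · rw [h0', zero_mul] at hT
        omega
      · rw [h1', one_mul] at hT
        omega
      · have h3 : 2 * (k - 1) ≤ T.card * (k - 1) := Nat.mul_le_mul_right _ h2'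
        rw [← hT] at h3
        omega
  have hv2k : 2 * k ≤ v - 1 := by
    have : k * 2 ≤ k * I.card := Nat.mul_le_mul_left k hI2
    omega
  refine ⟨part1, ?_, ?_⟩
  · rw [hS₁, card_subtype_filter B (fun b => x₀ ∈ b)]
    exact (Nat.div_eq_of_eq_mul_left (by omega) hTcount).symm
  · refine (Nat.div_eq_of_eq_mul_left (Nat.mul_pos (by omega) (by omega)) ?_).symm
    -- pass to integers
    have e1 : (B.card : ℤ) * (k * (k - 1)) = v * (v - 1) := by
      have := hBcard
      zify [show 1 ≤ k by omega, show 1 ≤ v by omega] at this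
      linarith
    have e2 : (k : ℤ) * I.card = v - 1 := by
      have := hIk
      zify [show 1 ≤ v by omega] at this
      linarith
    have e3 : ((v : ℤ) - 1) = T.card * (k - 1) := by
      have := hTcount
      zify [show 1 ≤ k by omega, show 1 ≤ v by omega] at this
      linarith
    have e4 : ((Finset.univ.filter fun b : {b : Finset α // b ∈ B} =>
          b ∉ I ∧ (I.filter fun c => (BIG 1 B).Adj b c).card = k - 1).card : ℤ)
        + (Finset.univ.filter fun b : {b : Finset α // b ∈ B} =>
          b ∉ I ∧ (I.filter fun c => (BIG 1 B).Adj b c).card = k).card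
        + I.card = B.card := by
      exact_mod_cast hpartition
    have e5 : ((Finset.univ.filter fun b : {b : Finset α // b ∈ B} =>
          b ∉ I ∧ (I.filter fun c => (BIG 1 B).Adj b c).card = k - 1).card : ℤ)
        = T.card := by
      rw [hS₁, card_subtype_filter B (fun b => x₀ ∈ b)]
    have key : ((v : ℤ) - 1) * ((v : ℤ) + 1 - 2 * k)
        = ((Finset.univ.filter fun b : {b : Finset α // b ∈ B} =>
          b ∉ I ∧ (I.filter fun c => (BIG 1 B).Adj b c).card = k).card : ℤ) * (k * (k - 1)) := by
      linear_combination -e1 + ((k : ℤ) - 1) * e2 - (k : ℤ) * e3 - ((k : ℤ) * (k - 1)) * e4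
        + ((k : ℤ) * (k - 1)) * e5
    have hc1 : ((v - 1 : ℕ) : ℤ) = (v : ℤ) - 1 := by omega
    have hc2 : ((v + 1 - 2 * k : ℕ) : ℤ) = (v : ℤ) + 1 - 2 * k := by omega
    have hc3 : ((k - 1 : ℕ) : ℤ) = (k : ℤ) - 1 := by omega
    refine (Nat.cast_inj (R := ℤ)).mp ?_
    rw [Nat.cast_mul, Nat.cast_mul, Nat.cast_mul, hc1, hc2, hc3]
    linear_combination key
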